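/- arXiv:1908.07870 — 10 statements merged into one kernel-verified Lean document; each statement's English description precedes it below -/
import Mathlib

section
/- For every achievement row y_i, the deprivation count satisfies D_i ≤ d̄ := d + (Σ − d)/(d − 1), and D_i = d̄ if and only if y_{ij} ≤ z_j for every dimension j (i.e. r_{ij}^0 = 1 for all j). -/
open Finset

/-- Deprivation gap `r_{ij}^α` for an achievement row `y` (convention `0 ^ (0:ℝ) = 1`). -/
noncomputable def gap {d : ℕ} (z y : Fin d → ℝ) (α : ℝ) (j : Fin d) : ℝ :=
  if y j ≤ z j then ((z j - y j) / z j) ^ α else 0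

/-- Network-adjusted deprivation `D_{ij}^α`. -/
noncomputable def Dnet {d : ℕ} (M : Fin d → Fin d → ℝ) (z y : Fin d → ℝ) (α : ℝ)
    (j : Fin d) : ℝ :=
  gap z y α j + (1 / ((d : ℝ) - 1)) * ∑ j' ∈ Finset.univ.erase j, M j j' * gap z y α j'

/-- Sum `Σ_j` of the `j`-th column of `M`. -/
noncomputable def colSum {d : ℕ} (M : Fin d → Fin d → ℝ) (j : Fin d) : ℝ := ∑ j', M j' j

/-- `D_i ≤ d̄ = d + (Σ − d)/(d − 1)`, with equality iff `y_j ≤ z_j` for all `j`. -/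
theorem Di_le_dbar_iff (d : ℕ) (hd : 2 ≤ d) (z : Fin d → ℝ) (hz : ∀ j, 0 < z j)
    (M : Fin d → Fin d → ℝ) (hM0 : ∀ j j', 0 ≤ M j j') (hM1 : ∀ j j', M j j' ≤ 1)
    (hMdiag : ∀ j, M j j = 1) (y : Fin d → ℝ) (hy : ∀ j, 0 ≤ y j) :
    (∑ j, Dnet M z y 0 j) ≤ (d : ℝ) + ((∑ j, ∑ j', M j j') - (d : ℝ)) / ((d : ℝ) - 1) ∧
    ((∑ j, Dnet M z y 0 j) = (d : ℝ) + ((∑ j, ∑ j', M j j') - (d : ℝ)) / ((d : ℝ) - 1) ↔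
      ∀ j, y j ≤ z j) := by
  have hd2 : (2:ℝ) ≤ (d:ℝ) := by exact_mod_cast hd
  have hdpos : (0:ℝ) < (d:ℝ) - 1 := by linarith
  set c : ℝ := 1 / ((d:ℝ) - 1) with hc
  have hcpos : 0 < c := by rw [hc]; positivity
  set g := gap z y 0 with hgdef
  have hg : ∀ j, g j = if y j ≤ z j then 1 else 0 := by
    intro j
    simp only [hgdef, gap]
    split <;> simp [Real.rpow_zero]
  have hg0 : ∀ j, 0 ≤ g j := by intro j; rw [hg]; split <;> norm_num
  have hg1 : ∀ j, g j ≤ 1 := by intro j; rw [hg]; split <;> norm_num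
  have hsum : (∑ j, Dnet M z y 0 j)
      = (∑ j, g j) + c * ∑ j, ∑ j' ∈ univ.erase j, M j j' * g j' := by
    simp only [Dnet, ← hgdef, ← hc, Finset.sum_add_distrib, Finset.mul_sum]
  have hSig : (∑ j, ∑ j', M j j') = (d:ℝ) + ∑ j, ∑ j' ∈ univ.erase j, M j j' := by
    have h1 : ∀ j : Fin d, (∑ j', M j j') = M j j + ∑ j' ∈ univ.erase j, M j j' :=
      fun j => (Finset.add_sum_erase univ (M j) (mem_univ j)).symm
    calc (∑ j, ∑ j', M j j')
        = ∑ j, (M j j + ∑ j' ∈ univ.erase j, M j j') :=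
          Finset.sum_congr rfl fun j _ => h1 j
      _ = (d:ℝ) + ∑ j, ∑ j' ∈ univ.erase j, M j j' := by
          rw [Finset.sum_add_distrib]; simp [hMdiag]
  have hrhs : (d : ℝ) + ((∑ j, ∑ j', M j j') - (d : ℝ)) / ((d : ℝ) - 1)
      = (d:ℝ) + c * ∑ j, ∑ j' ∈ univ.erase j, M j j' := by
    rw [hSig, hc]; ring
  have hA : (∑ j, g j) ≤ (d:ℝ) := by
    calc (∑ j, g j) ≤ ∑ _j : Fin d, (1:ℝ) := Finset.sum_le_sum fun j _ => hg1 j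
    _ = (d:ℝ) := by simp
  have hB : (∑ j, ∑ j' ∈ univ.erase j, M j j' * g j')
      ≤ ∑ j, ∑ j' ∈ univ.erase j, M j j' := by
    refine Finset.sum_le_sum fun j _ => Finset.sum_le_sum fun j' _ => ?_
    exact mul_le_of_le_one_right (hM0 j j') (hg1 j')
  constructor
  · rw [hsum, hrhs]
    exact add_le_add hA (mul_le_mul_of_nonneg_left hB hcpos.le)
  · constructor
    · intro heq j
      rw [hsum, hrhs] at heq
      have hAeq : (∑ j, g j) = (d:ℝ) := by
        have := mul_le_mul_of_nonneg_left hB hcpos.le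
        linarith
      by_contra hyz
      have hlt : (∑ j, g j) < ∑ _j : Fin d, (1:ℝ) := by
        refine Finset.sum_lt_sum (fun j _ => hg1 j) ⟨j, mem_univ j, ?_⟩
        rw [hg]; simp [hyz]
      rw [hAeq] at hlt
      simp at hlt
    · intro hall
      have hgall : ∀ j, g j = 1 := fun j => by rw [hg]; simp [hall j]
      rw [hsum, hrhs]
      simp [hgall]
end

section
/- For every achievement row y_i, either D_i = 0 or D_i ≥ d̲ := 1 + (min_{1≤j≤d} Σ_j − 1)/(d − 1). Moreover, if y_i is deprived in exactly one dimension j (i.e. r_{ij}^0 = 1 and r_{ij'}^0 = 0 for all j' ≠ j), then D_i = 1 + (Σ_j − 1)/(d − 1). -/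
open Finset

lemma gap_zero_eq {d : ℕ} (z y : Fin d → ℝ) (j : Fin d) :
    gap z y 0 j = if y j ≤ z j then 1 else 0 := by
  unfold gap
  split <;> simp [Real.rpow_zero]

lemma Dnet_sum_eq {d : ℕ} (M : Fin d → Fin d → ℝ) (z y : Fin d → ℝ)
    (hMdiag : ∀ j, M j j = 1) :
    ∑ j, Dnet M z y 0 j
      = ∑ j, gap z y 0 j * (1 + (1 / ((d : ℝ) - 1)) * (colSum M j - 1)) := by
  set c : ℝ := 1 / ((d : ℝ) - 1)
  set g : Fin d → ℝ := gap z y 0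
  have herase : ∀ j : Fin d, ∑ j' ∈ Finset.univ.erase j, M j j' * g j'
      = (∑ j', M j j' * g j') - g j := by
    intro j
    rw [Finset.sum_erase_eq_sub (Finset.mem_univ j), hMdiag j, one_mul]
  have hswap : ∑ j, ∑ j', M j j' * g j' = ∑ j', g j' * colSum M j' := by
    rw [Finset.sum_comm]
    refine Finset.sum_congr rfl fun j' _ => ?_
    rw [colSum, Finset.mul_sum]
    exact Finset.sum_congr rfl fun j _ => mul_comm _ _
  unfold Dnet
  rw [Finset.sum_add_distrib]
  change ∑ j, g j + ∑ j, c * ∑ j' ∈ Finset.univ.erase j, M j j' * g j' = ∑ j, g j * (1 + c * (colSum M j - 1))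
  simp only [herase]
  rw [← Finset.mul_sum, Finset.sum_sub_distrib, hswap]
  have : ∀ j : Fin d, g j * (1 + c * (colSum M j - 1))
      = g j + c * (g j * colSum M j - g j) := by intro j; ring
  simp only [this]
  rw [Finset.sum_add_distrib, ← Finset.mul_sum, Finset.sum_sub_distrib]

/-- either `D_i = 0` or `D_i ≥ d̲ = 1 + (min_j Σ_j − 1)/(d−1)`; and if `y`
is deprived in exactly one dimension `j` then `D_i = 1 + (Σ_j − 1)/(d−1)`. -/
theorem Di_lower_bound (d : ℕ) (hd : 2 ≤ d) (z : Fin d → ℝ) (hz : ∀ j, 0 < z j)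
    (M : Fin d → Fin d → ℝ) (hM0 : ∀ j j', 0 ≤ M j j') (hM1 : ∀ j j', M j j' ≤ 1)
    (hMdiag : ∀ j, M j j = 1) (y : Fin d → ℝ) (hy : ∀ j, 0 ≤ y j) :
    ((∑ j, Dnet M z y 0 j) = 0 ∨
      1 + (sInf (Set.range fun j => colSum M j) - 1) / ((d : ℝ) - 1) ≤
        ∑ j, Dnet M z y 0 j) ∧
    (∀ j : Fin d, gap z y 0 j = 1 → (∀ j', j' ≠ j → gap z y 0 j' = 0) →
      (∑ j'', Dnet M z y 0 j'') = 1 + (colSum M j - 1) / ((d : ℝ) - 1)) := by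
  have hd1 : (0:ℝ) < (d : ℝ) - 1 := by
    have : (2:ℝ) ≤ (d : ℝ) := by exact_mod_cast hd
    linarith
  set c : ℝ := 1 / ((d : ℝ) - 1) with hc
  have hcpos : 0 < c := by positivity
  have hcol : ∀ j : Fin d, 1 ≤ colSum M j := by
    intro j
    have := Finset.single_le_sum (f := fun j' => M j' j)
      (fun i _ => hM0 i j) (Finset.mem_univ j)
    simpa [hMdiag j, colSum] using this
  have hg01 : ∀ j : Fin d, gap z y 0 j = 0 ∨ gap z y 0 j = 1 := by
    intro j; rw [gap_zero_eq]; split <;> simp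
  have hgnn : ∀ j : Fin d, 0 ≤ gap z y 0 j := by
    intro j; rcases hg01 j with h | h <;> rw [h] <;> norm_num
  have hsum := Dnet_sum_eq M z y hMdiag
  have htermnn : ∀ j : Fin d,
      0 ≤ gap z y 0 j * (1 + c * (colSum M j - 1)) := by
    intro j
    have h1 : 0 ≤ 1 + c * (colSum M j - 1) := by
      have := hcol j
      nlinarith
    exact mul_nonneg (hgnn j) h1
  constructor
  · by_cases hall : ∀ j : Fin d, gap z y 0 j = 0
    · left
      rw [hsum]
      apply Finset.sum_eq_zero
      intro j _
      rw [hall j, zero_mul]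
    · right
      push_neg at hall
      obtain ⟨j0, hj0⟩ := hall
      have hj1 : gap z y 0 j0 = 1 := (hg01 j0).resolve_left hj0
      have hbdd : BddBelow (Set.range fun j => colSum M j) :=
        (Set.finite_range _).bddBelow
      have hinf : sInf (Set.range fun j => colSum M j) ≤ colSum M j0 :=
        csInf_le hbdd ⟨j0, rfl⟩
      have hle : 1 + (sInf (Set.range fun j => colSum M j) - 1) / ((d : ℝ) - 1)
          ≤ gap z y 0 j0 * (1 + c * (colSum M j0 - 1)) := by
        rw [hj1, one_mul, hc]
        have h2 : (sInf (Set.range fun j => colSum M j) - 1) / ((d : ℝ) - 1)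
            ≤ (colSum M j0 - 1) / ((d : ℝ) - 1) :=
          (div_le_div_iff_of_pos_right hd1).mpr (by linarith)
        have h3 : 1 / ((d : ℝ) - 1) * (colSum M j0 - 1)
            = (colSum M j0 - 1) / ((d : ℝ) - 1) := by ring
        linarith
      calc 1 + (sInf (Set.range fun j => colSum M j) - 1) / ((d : ℝ) - 1)
          ≤ gap z y 0 j0 * (1 + c * (colSum M j0 - 1)) := hle
        _ ≤ ∑ j, gap z y 0 j * (1 + c * (colSum M j - 1)) :=
            Finset.single_le_sum (fun i _ => htermnn i) (Finset.mem_univ j0)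
        _ = ∑ j, Dnet M z y 0 j := hsum.symm
  · intro j hj hother
    rw [hsum]
    rw [Finset.sum_eq_single j]
    · rw [hj, one_mul]; ring
    · intro j' _ hne
      rw [hother j' hne, zero_mul]
    · intro h; exact absurd (Finset.mem_univ j) h
end

section
/- For every achievement row y_i one has the linear representation D_i = Σ_{j=1}^d δ_j · r_{ij}^0, where δ_j := 1 + (Σ_j − 1)/(d − 1). Consequently, if two achievement rows y_i and x_i satisfy r_{ij'}^0(x_i) = r_{ij'}^0(y_i) for all j' ≠ j, r_{ij}^0(y_i) = 0 and r_{ij}^0(x_i) = 1, then D_i(x_i) − D_i(y_i) = δ_j exactly. -/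
open Finset

/-- linear representation `D_i = Σ_j δ_j r_{ij}^0` with
`δ_j = 1 + (Σ_j − 1)/(d−1)`, and the exact jump `δ_j` when one deprivation is switched on. -/
theorem Di_linear_representation (d : ℕ) (hd : 2 ≤ d) (z : Fin d → ℝ) (hz : ∀ j, 0 < z j)
    (M : Fin d → Fin d → ℝ) (hM0 : ∀ j j', 0 ≤ M j j') (hM1 : ∀ j j', M j j' ≤ 1)
    (hMdiag : ∀ j, M j j = 1) :
    (∀ y : Fin d → ℝ, (∀ j, 0 ≤ y j) →
      (∑ j, Dnet M z y 0 j) =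
        ∑ j, (1 + (colSum M j - 1) / ((d : ℝ) - 1)) * gap z y 0 j) ∧
    (∀ x y : Fin d → ℝ, (∀ j, 0 ≤ x j) → (∀ j, 0 ≤ y j) → ∀ j : Fin d,
      (∀ j', j' ≠ j → gap z x 0 j' = gap z y 0 j') →
      gap z y 0 j = 0 → gap z x 0 j = 1 →
      (∑ j'', Dnet M z x 0 j'') - (∑ j'', Dnet M z y 0 j'') =
        1 + (colSum M j - 1) / ((d : ℝ) - 1)) := by
  have key : ∀ y : Fin d → ℝ,
      (∑ j, Dnet M z y 0 j) =
        ∑ j, (1 + (colSum M j - 1) / ((d : ℝ) - 1)) * gap z y 0 j := by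
    intro y
    have hswap : ∑ j, ∑ j' ∈ Finset.univ.erase j, M j j' * gap z y 0 j'
        = ∑ j', (colSum M j' - 1) * gap z y 0 j' := by
      have : ∀ j : Fin d, ∑ j' ∈ Finset.univ.erase j, M j j' * gap z y 0 j'
          = (∑ j', M j j' * gap z y 0 j') - gap z y 0 j := by
        intro j
        rw [Finset.sum_erase_eq_sub (Finset.mem_univ j), hMdiag j, one_mul]
      simp only [this, Finset.sum_sub_distrib]
      rw [Finset.sum_comm]
      simp only [colSum, sub_mul, Finset.sum_sub_distrib, one_mul, Finset.sum_mul]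
    simp only [Dnet, Finset.sum_add_distrib, ← Finset.mul_sum, hswap]
    rw [Finset.mul_sum]
    rw [← Finset.sum_add_distrib]
    apply Finset.sum_congr rfl
    intro j _
    ring
  refine ⟨fun y _ => key y, fun x y hx hy j hne hy0 hx1 => ?_⟩
  rw [key x, key y, ← Finset.sum_sub_distrib]
  rw [Finset.sum_eq_single j]
  · rw [hy0, hx1]; ring
  · intro j' _ h
    rw [hne j' h]; ring
  · intro h; exact absurd (Finset.mem_univ j) h
end

section
/- Let α > 0 and let x_i, y_i be achievement rows that agree in every coordinate except one coordinate j', where x_{ij'} > y_{ij'}. Then for every dimension j, D_{ij}^α(x_i) ≤ D_{ij}^α(y_i); and if moreover j' = j and y_{ij} < z_j, then D_{ij}^α(x_i) < D_{ij}^α(y_i). In other words, better achievements never increase, and strictly better achievement in a deprived dimension strictly decreases, network-adjusted deprivation. -/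
open Finset

lemma gap_nonneg {d : ℕ} {z : Fin d → ℝ} (y : Fin d → ℝ) (hz : ∀ j, 0 < z j) (α : ℝ)
    (j : Fin d) : 0 ≤ gap z y α j := by
  unfold gap
  split_ifs with h
  · exact Real.rpow_nonneg (div_nonneg (by linarith [hz j]) (hz j).le) α
  · exact le_refl 0

lemma gap_mono {d : ℕ} {z x y : Fin d → ℝ} (hz : ∀ j, 0 < z j) {α : ℝ} (hα : 0 < α)
    {j : Fin d} (h : y j ≤ x j) : gap z x α j ≤ gap z y α j := by
  unfold gap
  split_ifs with h1 h2 h2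
  · apply Real.rpow_le_rpow (div_nonneg (by linarith [hz j]) (hz j).le) _ hα.le
    exact (div_le_div_iff_of_pos_right (hz j)).mpr (by linarith)
  · exact absurd (h.trans h1) h2
  · exact Real.rpow_nonneg (div_nonneg (by linarith [hz j]) (hz j).le) α
  · exact le_refl 0

lemma gap_strict {d : ℕ} {z x y : Fin d → ℝ} (hz : ∀ j, 0 < z j) {α : ℝ} (hα : 0 < α)
    {j : Fin d} (h : y j < x j) (hdep : y j < z j) : gap z x α j < gap z y α j := by
  have hy : y j ≤ z j := hdep.le
  have hzj := hz j
  have hpos : 0 < (z j - y j) / z j := div_pos (by linarith) hzj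
  unfold gap
  rw [if_pos hy]
  split_ifs with h1
  · exact Real.rpow_lt_rpow (div_nonneg (by linarith) hzj.le)
      ((div_lt_div_iff_of_pos_right hzj).mpr (by linarith)) hα
  · exact Real.rpow_pos_of_pos hpos α

/-- for `α > 0`, a simple increment in coordinate `j'` never increases any
`D_{ij}^α`, and strictly decreases `D_{ij'}^α` when the incremented dimension was deprived. -/
theorem Dnet_monotone (d : ℕ) (hd : 2 ≤ d) (z : Fin d → ℝ) (hz : ∀ j, 0 < z j)
    (M : Fin d → Fin d → ℝ) (hM0 : ∀ j j', 0 ≤ M j j') (hM1 : ∀ j j', M j j' ≤ 1)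
    (hMdiag : ∀ j, M j j = 1) (α : ℝ) (hα : 0 < α)
    (x y : Fin d → ℝ) (hx : ∀ j, 0 ≤ x j) (hy : ∀ j, 0 ≤ y j)
    (j' : Fin d) (hgt : y j' < x j') (heq : ∀ j, j ≠ j' → x j = y j) :
    (∀ j, Dnet M z x α j ≤ Dnet M z y α j) ∧
    (y j' < z j' → Dnet M z x α j' < Dnet M z y α j') := by
  have hgap : ∀ j, gap z x α j ≤ gap z y α j := by
    intro j
    by_cases hj : j = j'
    · subst hj; exact gap_mono hz hα hgt.le
    · exact gap_mono hz hα (heq j hj).ge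
  have hc : (0:ℝ) ≤ 1 / ((d : ℝ) - 1) := by
    have : (2:ℝ) ≤ d := by exact_mod_cast hd
    apply div_nonneg zero_le_one; linarith
  have hsum : ∀ j, (∑ j'' ∈ Finset.univ.erase j, M j j'' * gap z x α j'')
      ≤ ∑ j'' ∈ Finset.univ.erase j, M j j'' * gap z y α j'' := by
    intro j
    apply Finset.sum_le_sum
    intro i _
    exact mul_le_mul_of_nonneg_left (hgap i) (hM0 j i)
  constructor
  · intro j
    unfold Dnet
    exact add_le_add (hgap j) (mul_le_mul_of_nonneg_left (hsum j) hc)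
  · intro hdep
    unfold Dnet
    have hstrict := gap_strict hz hα hgt hdep
    have hsum' : (∑ j'' ∈ Finset.univ.erase j', M j' j'' * gap z x α j'')
        = ∑ j'' ∈ Finset.univ.erase j', M j' j'' * gap z y α j'' := by
      apply Finset.sum_congr rfl
      intro i hi
      congr 1
      unfold gap
      rw [heq i (Finset.mem_erase.mp hi).1]
    rw [hsum']
    linarith
end

section
/- Decomposability: if an achievement matrix is split by rows into two achievement matrices x (with n(x) rows) and y (with n(y) rows), then for all α ≥ 0, FGT_α(x,y; z) = (n(x)/(n(x)+n(y))) · FGT_α(x; z) + (n(y)/(n(x)+n(y))) · FGT_α(y; z), where (x,y) denotes the stacked (n(x)+n(y))×d matrix. -/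
open Finset

/-- Weighted deprivation count `D_i = Σ_j w_j D_{ij}^0`. -/
noncomputable def Dcount {d : ℕ} (M : Fin d → Fin d → ℝ) (z w y : Fin d → ℝ) : ℝ :=
  ∑ j, w j * Dnet M z y 0 j

/-- Dual-cutoff identification function `ρ_k`. -/
noncomputable def rho {d : ℕ} (M : Fin d → Fin d → ℝ) (z w : Fin d → ℝ) (k : ℝ)
    (y : Fin d → ℝ) : ℝ :=
  if k ≤ Dcount M z w y then 1 else 0

/-- Network-adjusted FGT measure with normalizing constant `dt`. -/
noncomputable def FGT {N d : ℕ} (M : Fin d → Fin d → ℝ) (z w : Fin d → ℝ) (k α dt : ℝ)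
    (y : Fin N → Fin d → ℝ) : ℝ :=
  (1 / ((N : ℝ) * dt)) * ∑ i, ∑ j, w j * Dnet M z (y i) α j * rho M z w k (y i)

/-- decomposability of the network-adjusted FGT measure. -/
theorem FGT_decomposable
    (d : ℕ) (hd : 2 ≤ d) (z : Fin d → ℝ) (hz : ∀ j, 0 < z j)
    (M : Fin d → Fin d → ℝ) (hM0 : ∀ j j', 0 ≤ M j j') (hM1 : ∀ j j', M j j' ≤ 1)
    (hMdiag : ∀ j, M j j = 1)
    (w : Fin d → ℝ) (hw : ∀ j, 0 < w j) (hwsum : (∑ j, w j) = (d : ℝ))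
    (dt : ℝ) (hdt : dt = (d : ℝ) + ((∑ j, w j * colSum M j) - (d : ℝ)) / ((d : ℝ) - 1))
    (k : ℝ) (hk0 : 0 < k) (hk1 : k ≤ dt) (α : ℝ) (hα : 0 ≤ α)
    (n m : ℕ) (hn : 1 ≤ n) (hm : 1 ≤ m)
    (x : Fin n → Fin d → ℝ) (hx : ∀ i j, 0 ≤ x i j)
    (y : Fin m → Fin d → ℝ) (hy : ∀ i j, 0 ≤ y i j) :
    FGT M z w k α dt (Fin.append x y) =
      ((n : ℝ) / ((n : ℝ) + (m : ℝ))) * FGT M z w k α dt x +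
        ((m : ℝ) / ((n : ℝ) + (m : ℝ))) * FGT M z w k α dt y := by
  unfold FGT
  rw [Fin.sum_univ_add]
  simp only [Fin.append_left, Fin.append_right, Nat.cast_add]
  have hn' : (n : ℝ) ≠ 0 := Nat.cast_ne_zero.2 (by omega)
  have hm' : (m : ℝ) ≠ 0 := Nat.cast_ne_zero.2 (by omega)
  have hnm : (n : ℝ) + (m : ℝ) ≠ 0 := by positivity
  rcases eq_or_ne dt 0 with h | h
  · simp [h]
  · field_simp
end

section
/- Poverty focus: suppose the achievement matrix x is obtained from y by a simple increment among the non-poor, i.e. there is a single entry (i', j') with x_{i'j'} > y_{i'j'}, all other entries of x and y coincide, and person i' is not poor in y (ρ_k(y_{i'}) = 0). Then for all α ≥ 0, FGT_α(x; z) = FGT_α(y; z). -/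
open Finset

/-- poverty focus — a simple increment among the non-poor leaves FGT unchanged. -/
theorem FGT_poverty_focus
    (d : ℕ) (hd : 2 ≤ d) (z : Fin d → ℝ) (hz : ∀ j, 0 < z j)
    (M : Fin d → Fin d → ℝ) (hM0 : ∀ j j', 0 ≤ M j j') (hM1 : ∀ j j', M j j' ≤ 1)
    (hMdiag : ∀ j, M j j = 1)
    (w : Fin d → ℝ) (hw : ∀ j, 0 < w j) (hwsum : (∑ j, w j) = (d : ℝ))
    (dt : ℝ) (hdt : dt = (d : ℝ) + ((∑ j, w j * colSum M j) - (d : ℝ)) / ((d : ℝ) - 1))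
    (k : ℝ) (hk0 : 0 < k) (hk1 : k ≤ dt) (α : ℝ) (hα : 0 ≤ α)
    (N : ℕ) (hN : 1 ≤ N)
    (x y : Fin N → Fin d → ℝ) (hx : ∀ i j, 0 ≤ x i j) (hy : ∀ i j, 0 ≤ y i j)
    (i' : Fin N) (j' : Fin d) (hgt : y i' j' < x i' j')
    (hother : ∀ i j, ¬(i = i' ∧ j = j') → x i j = y i j)
    (hnonpoor : rho M z w k (y i') = 0) :
    FGT M z w k α dt x = FGT M z w k α dt y := by
  have hrow : ∀ i, i ≠ i' → x i = y i := by
    intro i hi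
    funext j
    exact hother i j (by tauto)
  -- x i' dominates y i'
  have hdom : ∀ j, y i' j ≤ x i' j := by
    intro j
    by_cases hj : j = j'
    · subst hj; exact le_of_lt hgt
    · exact (hother i' j (by tauto)).ge
  -- gap at α = 0 is monotone nonincreasing
  have hgap : ∀ j, gap z (x i') 0 j ≤ gap z (y i') 0 j := by
    intro j
    unfold gap
    by_cases h1 : x i' j ≤ z j
    · have h2 : y i' j ≤ z j := le_trans (hdom j) h1
      simp [h1, h2]
    · simp only [h1, if_false]
      by_cases h2 : y i' j ≤ z j
      · simp only [h2, if_true]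
        positivity
      · simp [h2]
  have hDnet : ∀ j, Dnet M z (x i') 0 j ≤ Dnet M z (y i') 0 j := by
    intro j
    unfold Dnet
    have hden : (0:ℝ) ≤ 1 / ((d : ℝ) - 1) := by
      have : (2:ℝ) ≤ (d:ℝ) := by exact_mod_cast hd
      have : (0:ℝ) ≤ (d:ℝ) - 1 := by linarith
      positivity
    gcongr with j'' hj'' <;> first
      | exact hM0 _ _
      | exact hgap _
  have hDcount : Dcount M z w (x i') ≤ Dcount M z w (y i') := by
    unfold Dcount
    gcongr with j hj
    · exact (hw j).le
    · exact hDnet j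
  have hky : ¬ k ≤ Dcount M z w (y i') := by
    intro h
    simp [rho, h] at hnonpoor
  have hrhox : rho M z w k (x i') = 0 := by
    have : ¬ k ≤ Dcount M z w (x i') := fun h => hky (le_trans h hDcount)
    simp [rho, this]
  unfold FGT
  congr 1
  apply Finset.sum_congr rfl
  intro i _
  by_cases hi : i = i'
  · subst hi
    simp [hrhox, hnonpoor]
  · rw [hrow i hi]
end

section
/- Deprivation focus: suppose the achievement matrix x is obtained from y by a simple increment among the non-deprived, i.e. there is a single entry (i', j') with x_{i'j'} > y_{i'j'} > z_{j'} and all other entries of x and y coincide. Then for all α ≥ 0, FGT_α(x; z) = FGT_α(y; z). -/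
open Finset

/-- deprivation focus — a simple increment among the non-deprived leaves FGT
unchanged. -/
theorem FGT_deprivation_focus
    (d : ℕ) (hd : 2 ≤ d) (z : Fin d → ℝ) (hz : ∀ j, 0 < z j)
    (M : Fin d → Fin d → ℝ) (hM0 : ∀ j j', 0 ≤ M j j') (hM1 : ∀ j j', M j j' ≤ 1)
    (hMdiag : ∀ j, M j j = 1)
    (w : Fin d → ℝ) (hw : ∀ j, 0 < w j) (hwsum : (∑ j, w j) = (d : ℝ))
    (dt : ℝ) (hdt : dt = (d : ℝ) + ((∑ j, w j * colSum M j) - (d : ℝ)) / ((d : ℝ) - 1))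
    (k : ℝ) (hk0 : 0 < k) (hk1 : k ≤ dt) (α : ℝ) (hα : 0 ≤ α)
    (N : ℕ) (hN : 1 ≤ N)
    (x y : Fin N → Fin d → ℝ) (hx : ∀ i j, 0 ≤ x i j) (hy : ∀ i j, 0 ≤ y i j)
    (i' : Fin N) (j' : Fin d) (hgt : y i' j' < x i' j') (hnondep : z j' < y i' j')
    (hother : ∀ i j, ¬(i = i' ∧ j = j') → x i j = y i j) :
    FGT M z w k α dt x = FGT M z w k α dt y := by
  have hgap : ∀ (β : ℝ) (i : Fin N) (j : Fin d), gap z (x i) β j = gap z (y i) β j := by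
    intro β i j
    by_cases h : i = i' ∧ j = j'
    · obtain ⟨rfl, rfl⟩ := h
      unfold gap
      rw [if_neg (by linarith), if_neg (by linarith)]
    · rw [gap, gap, hother i j h]
  have hD : ∀ (β : ℝ) (i : Fin N) (j : Fin d), Dnet M z (x i) β j = Dnet M z (y i) β j := by
    intro β i j
    unfold Dnet
    rw [hgap]
    congr 2
    exact Finset.sum_congr rfl fun j'' _ => by rw [hgap]
  have hρ : ∀ i, rho M z w k (x i) = rho M z w k (y i) := by
    intro i
    unfold rho Dcount
    simp only [hD]
  unfold FGT
  congr 1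
  exact Finset.sum_congr rfl fun i _ => Finset.sum_congr rfl fun j _ => by rw [hD, hρ]
end

section
/- Weak rearrangement: suppose the achievement matrix x is obtained from y by an association decreasing rearrangement among the poor, i.e. there are two distinct individuals i, i' with ρ_k(y_i) = ρ_k(y_{i'}) = 1 and y_{ij} ≥ y_{i'j} for all j, such that for each dimension j either (x_{ij}, x_{i'j}) = (y_{i'j}, y_{ij}) or (x_{ij}, x_{i'j}) = (y_{ij}, y_{i'j}), all rows other than i and i' coincide in x and y, and the rows x_i and x_{i'} are not comparable by componentwise vector dominance. Then for all α ≥ 0, FGT_α(x; z) ≤ FGT_α(y; z). -/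
open Finset

/-- weak rearrangement — an association decreasing rearrangement among the
poor does not increase FGT. -/
theorem FGT_weak_rearrangement
    (d : ℕ) (hd : 2 ≤ d) (z : Fin d → ℝ) (hz : ∀ j, 0 < z j)
    (M : Fin d → Fin d → ℝ) (hM0 : ∀ j j', 0 ≤ M j j') (hM1 : ∀ j j', M j j' ≤ 1)
    (hMdiag : ∀ j, M j j = 1)
    (w : Fin d → ℝ) (hw : ∀ j, 0 < w j) (hwsum : (∑ j, w j) = (d : ℝ))
    (dt : ℝ) (hdt : dt = (d : ℝ) + ((∑ j, w j * colSum M j) - (d : ℝ)) / ((d : ℝ) - 1))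
    (k : ℝ) (hk0 : 0 < k) (hk1 : k ≤ dt) (α : ℝ) (hα : 0 ≤ α)
    (N : ℕ) (hN : 1 ≤ N)
    (x y : Fin N → Fin d → ℝ) (hx : ∀ i j, 0 ≤ x i j) (hy : ∀ i j, 0 ≤ y i j)
    (i i' : Fin N) (hne : i ≠ i')
    (hpoor : rho M z w k (y i) = 1) (hpoor' : rho M z w k (y i') = 1)
    (hdom : ∀ j, y i' j ≤ y i j)
    (hswap : ∀ j, (x i j = y i' j ∧ x i' j = y i j) ∨ (x i j = y i j ∧ x i' j = y i' j))
    (hother : ∀ i'', i'' ≠ i → i'' ≠ i' → x i'' = y i'')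
    (hincomp : ¬(∀ j, x i j ≤ x i' j) ∧ ¬(∀ j, x i' j ≤ x i j)) :
    FGT M z w k α dt x ≤ FGT M z w k α dt y := by
  have hdpos : (0:ℝ) < (d:ℝ) - 1 := by
    have : (2:ℝ) ≤ d := by exact_mod_cast hd
    linarith
  have hdtpos : 0 < dt := lt_of_lt_of_le hk0 hk1
  have hcpos : 0 ≤ 1 / ((N : ℝ) * dt) := by positivity
  -- gap is nonnegative
  have hgap : ∀ (v : Fin d → ℝ) j, 0 ≤ gap z v α j := by
    intro v j
    unfold gap
    split
    · apply Real.rpow_nonneg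
      have := hz j
      have h' : 0 ≤ z j - v j := by linarith [‹v j ≤ z j›]
      positivity
    · exact le_refl 0
  have hDnet : ∀ (v : Fin d → ℝ) j, 0 ≤ Dnet M z v α j := by
    intro v j
    unfold Dnet
    have h1 : 0 ≤ ∑ j' ∈ Finset.univ.erase j, M j j' * gap z v α j' :=
      Finset.sum_nonneg fun j' _ => mul_nonneg (hM0 j j') (hgap v j')
    have h2 : 0 ≤ 1 / ((d:ℝ) - 1) := by positivity
    have := hgap v j
    nlinarith
  set S : (Fin d → ℝ) → ℝ := fun v => ∑ j, w j * Dnet M z v α j with hS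
  have hSnn : ∀ v, 0 ≤ S v := fun v =>
    Finset.sum_nonneg fun j _ => mul_nonneg (hw j).le (hDnet v j)
  -- per-dimension gap conservation
  have hkey : ∀ j, gap z (x i) α j + gap z (x i') α j
      = gap z (y i) α j + gap z (y i') α j := by
    intro j
    rcases hswap j with ⟨h1, h2⟩ | ⟨h1, h2⟩ <;>
      simp only [gap, h1, h2] <;> ring
  have hDkey : ∀ j, Dnet M z (x i) α j + Dnet M z (x i') α j
      = Dnet M z (y i) α j + Dnet M z (y i') α j := by
    intro j
    unfold Dnet
    have hsum : ∑ j' ∈ Finset.univ.erase j, M j j' * gap z (x i) α j'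
        + ∑ j' ∈ Finset.univ.erase j, M j j' * gap z (x i') α j'
        = ∑ j' ∈ Finset.univ.erase j, M j j' * gap z (y i) α j'
        + ∑ j' ∈ Finset.univ.erase j, M j j' * gap z (y i') α j' := by
      rw [← Finset.sum_add_distrib, ← Finset.sum_add_distrib]
      refine Finset.sum_congr rfl fun j' _ => ?_
      linear_combination M j j' * hkey j'
    linear_combination hkey j + (1 / ((d:ℝ) - 1)) * hsum
  have hSkey : S (x i) + S (x i') = S (y i) + S (y i') := by
    simp only [hS, ← Finset.sum_add_distrib]
    refine Finset.sum_congr rfl fun j _ => ?_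
    linear_combination w j * hDkey j
  -- rho is between 0 and 1
  have hrho01 : ∀ v : Fin d → ℝ, 0 ≤ rho M z w k v ∧ rho M z w k v ≤ 1 := by
    intro v; unfold rho; split <;> norm_num
  -- rewrite FGT inner sum
  have hFGT : ∀ u : Fin N → Fin d → ℝ, FGT M z w k α dt u
      = (1 / ((N : ℝ) * dt)) * ∑ m, S (u m) * rho M z w k (u m) := by
    intro u
    unfold FGT
    congr 1
    refine Finset.sum_congr rfl fun m _ => ?_
    rw [Finset.sum_mul]
  rw [hFGT, hFGT]
  apply mul_le_mul_of_nonneg_left _ hcpos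
  have hi' : i' ∈ Finset.univ.erase i :=
    Finset.mem_erase.mpr ⟨fun h => hne h.symm, Finset.mem_univ i'⟩
  have split : ∀ f : Fin N → ℝ, ∑ m, f m
      = f i + f i' + ∑ m ∈ (Finset.univ.erase i).erase i', f m := by
    intro f
    rw [← Finset.add_sum_erase _ f (Finset.mem_univ i), ← Finset.add_sum_erase _ f hi']
    ring
  rw [split, split]
  have hrest : ∑ m ∈ (Finset.univ.erase i).erase i', S (x m) * rho M z w k (x m)
      = ∑ m ∈ (Finset.univ.erase i).erase i', S (y m) * rho M z w k (y m) := by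
    refine Finset.sum_congr rfl fun m hm => ?_
    rw [Finset.mem_erase, Finset.mem_erase] at hm
    rw [hother m hm.2.1 hm.1]
  rw [hrest, hpoor, hpoor']
  have h1 := (hrho01 (x i)).2
  have h2 := (hrho01 (x i')).2
  have h3 := (hrho01 (x i)).1
  have h4 := (hrho01 (x i')).1
  have hb1 : S (x i) * rho M z w k (x i) ≤ S (x i) :=
    mul_le_of_le_one_right (hSnn _) h1
  have hb2 : S (x i') * rho M z w k (x i') ≤ S (x i') :=
    mul_le_of_le_one_right (hSnn _) h2
  nlinarith [hSkey]
end

section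
/- Weak transfer: let α ≥ 1 and suppose the achievement matrix x is obtained from y by averaging achievements among the poor, i.e. x = B·y for some N×N doubly stochastic matrix B with b_{ii} = 1 for every individual i that is not poor in y (ρ_k(y_i) = 0). Then FGT_α(x; z) ≤ FGT_α(y; z). -/
open Finset

/-- The per-coordinate gap function is convex in the achievement value when `α ≥ 1`. -/
lemma gapfun_convexOn (zj α : ℝ) (hzj : 0 < zj) (hα : 1 ≤ α) :
    ConvexOn ℝ Set.univ (fun t : ℝ => (max ((zj - t) / zj) 0) ^ α) := by
  have hinner : ConvexOn ℝ Set.univ (fun t : ℝ => max ((zj - t) / zj) 0) := by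
    have h1 : ConvexOn ℝ Set.univ (fun t : ℝ => (zj - t) / zj) := by
      refine ⟨convex_univ, fun p _ q _ a b ha hb hab => le_of_eq ?_⟩
      simp only [smul_eq_mul]
      field_simp
      linear_combination (-zj) * hab
    exact h1.sup (convexOn_const 0 convex_univ)
  refine ⟨convex_univ, fun p _ q _ a b ha hb hab => ?_⟩
  simp only [smul_eq_mul]
  set f : ℝ → ℝ := fun t => max ((zj - t) / zj) 0 with hf
  have hf0 : ∀ t, 0 ≤ f t := fun t => le_max_right _ _
  have h1 : f (a * p + b * q) ≤ a * f p + b * f q := by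
    have := hinner.2 (Set.mem_univ p) (Set.mem_univ q) ha hb hab
    simpa [smul_eq_mul] using this
  have hmono : f (a * p + b * q) ^ α ≤ (a * f p + b * f q) ^ α :=
    Real.rpow_le_rpow (hf0 _) h1 (le_trans zero_le_one hα)
  have h2 : (a * f p + b * f q) ^ α ≤ a * f p ^ α + b * f q ^ α := by
    have := (convexOn_rpow hα).2 (Set.mem_Ici.2 (hf0 p)) (Set.mem_Ici.2 (hf0 q)) ha hb hab
    simpa [smul_eq_mul] using this
  exact le_trans hmono h2

/-- weak transfer — for `α ≥ 1`, averaging achievements among the poor via a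
doubly stochastic matrix does not increase FGT. -/
theorem FGT_weak_transfer
    (d : ℕ) (hd : 2 ≤ d) (z : Fin d → ℝ) (hz : ∀ j, 0 < z j)
    (M : Fin d → Fin d → ℝ) (hM0 : ∀ j j', 0 ≤ M j j') (hM1 : ∀ j j', M j j' ≤ 1)
    (hMdiag : ∀ j, M j j = 1)
    (w : Fin d → ℝ) (hw : ∀ j, 0 < w j) (hwsum : (∑ j, w j) = (d : ℝ))
    (dt : ℝ) (hdt : dt = (d : ℝ) + ((∑ j, w j * colSum M j) - (d : ℝ)) / ((d : ℝ) - 1))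
    (k : ℝ) (hk0 : 0 < k) (hk1 : k ≤ dt) (α : ℝ) (hα : 1 ≤ α)
    (N : ℕ) (hN : 1 ≤ N)
    (y : Fin N → Fin d → ℝ) (hy : ∀ i j, 0 ≤ y i j)
    (B : Fin N → Fin N → ℝ) (hB0 : ∀ i i', 0 ≤ B i i')
    (hBrow : ∀ i, (∑ i', B i i') = 1) (hBcol : ∀ i', (∑ i, B i i') = 1)
    (hBfix : ∀ i, rho M z w k (y i) = 0 → B i i = 1)
    (x : Fin N → Fin d → ℝ) (hxy : ∀ i j, x i j = ∑ i', B i i' * y i' j) :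
    FGT M z w k α dt x ≤ FGT M z w k α dt y := by
  classical
  have hd1 : (0:ℝ) < (d:ℝ) - 1 := by
    have : (2:ℝ) ≤ (d:ℝ) := by exact_mod_cast hd
    linarith
  have hα0 : (0:ℝ) < α := lt_of_lt_of_le one_pos hα
  -- gap as a closed-form function of the value
  have hgap_eq : ∀ (u : Fin d → ℝ) j, gap z u α j = (max ((z j - u j) / z j) 0) ^ α := by
    intro u j
    unfold gap
    by_cases h : u j ≤ z j
    · rw [if_pos h, max_eq_left (div_nonneg (by linarith) (hz j).le)]
    · rw [if_neg h,
        max_eq_right (div_nonpos_iff.mpr (Or.inr ⟨by linarith, (hz j).le⟩)),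
        Real.zero_rpow (ne_of_gt hα0)]
  have hgap_nonneg : ∀ (u : Fin d → ℝ) j, 0 ≤ gap z u α j := by
    intro u j
    rw [hgap_eq]
    exact Real.rpow_nonneg (le_max_right _ _) _
  -- Jensen per coordinate
  have hjensen : ∀ i j, gap z (x i) α j ≤ ∑ i', B i i' * gap z (y i') α j := by
    intro i j
    have hconv := gapfun_convexOn (z j) α (hz j) hα
    have h := hconv.map_sum_le (t := Finset.univ) (w := B i) (p := fun i' => y i' j)
      (fun i' _ => hB0 i i') (hBrow i) (fun i' _ => Set.mem_univ _)
    simp only [smul_eq_mul] at h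
    rw [hgap_eq, hxy i j]
    calc (max ((z j - ∑ i', B i i' * y i' j) / z j) 0) ^ α
        ≤ ∑ i', B i i' * (max ((z j - y i' j) / z j) 0) ^ α := h
      _ = ∑ i', B i i' * gap z (y i') α j :=
          Finset.sum_congr rfl fun i' _ => by rw [hgap_eq]
  have hcoef : (0:ℝ) ≤ 1 / ((d:ℝ) - 1) := by positivity
  have hDnet_nonneg : ∀ (u : Fin d → ℝ) j, 0 ≤ Dnet M z u α j := by
    intro u j
    unfold Dnet
    have h1 : 0 ≤ ∑ j' ∈ Finset.univ.erase j, M j j' * gap z u α j' :=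
      Finset.sum_nonneg fun j' _ => mul_nonneg (hM0 j j') (hgap_nonneg u j')
    have h2 := mul_nonneg hcoef h1
    linarith [hgap_nonneg u j]
  have hDnet_le : ∀ i j, Dnet M z (x i) α j ≤ ∑ i', B i i' * Dnet M z (y i') α j := by
    intro i j
    unfold Dnet
    have h2 : ∑ j' ∈ Finset.univ.erase j, M j j' * gap z (x i) α j'
        ≤ ∑ j' ∈ Finset.univ.erase j, M j j' * ∑ i', B i i' * gap z (y i') α j' :=
      Finset.sum_le_sum fun j' _ => mul_le_mul_of_nonneg_left (hjensen i j') (hM0 j j')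
    have hswap : (1 / ((d:ℝ) - 1)) *
          ∑ j' ∈ Finset.univ.erase j, M j j' * ∑ i', B i i' * gap z (y i') α j'
        = ∑ i', B i i' *
            ((1 / ((d:ℝ) - 1)) * ∑ j' ∈ Finset.univ.erase j, M j j' * gap z (y i') α j') := by
      simp only [Finset.mul_sum]
      rw [Finset.sum_comm]
      exact Finset.sum_congr rfl fun _ _ => Finset.sum_congr rfl fun _ _ => by ring
    calc gap z (x i) α j
          + (1 / ((d:ℝ) - 1)) * ∑ j' ∈ Finset.univ.erase j, M j j' * gap z (x i) α j'
        ≤ (∑ i', B i i' * gap z (y i') α j)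
          + (1 / ((d:ℝ) - 1)) *
            ∑ j' ∈ Finset.univ.erase j, M j j' * ∑ i', B i i' * gap z (y i') α j' :=
          add_le_add (hjensen i j) (mul_le_mul_of_nonneg_left h2 hcoef)
      _ = ∑ i', B i i' * (gap z (y i') α j
            + (1 / ((d:ℝ) - 1)) * ∑ j' ∈ Finset.univ.erase j, M j j' * gap z (y i') α j') := by
          rw [hswap, ← Finset.sum_add_distrib]
          exact Finset.sum_congr rfl fun _ _ => by ring
  -- weighted row sums
  set S : (Fin d → ℝ) → ℝ := fun u => ∑ j, w j * Dnet M z u α j with hSdef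
  have hS_nonneg : ∀ u, 0 ≤ S u :=
    fun u => Finset.sum_nonneg fun j _ => mul_nonneg (hw j).le (hDnet_nonneg u j)
  have hS_le : ∀ i, S (x i) ≤ ∑ i', B i i' * S (y i') := by
    intro i
    calc S (x i) ≤ ∑ j, w j * ∑ i', B i i' * Dnet M z (y i') α j :=
        Finset.sum_le_sum fun j _ => mul_le_mul_of_nonneg_left (hDnet_le i j) (hw j).le
      _ = ∑ i', B i i' * S (y i') := by
        simp only [hSdef, Finset.mul_sum]
        rw [Finset.sum_comm]
        exact Finset.sum_congr rfl fun _ _ => Finset.sum_congr rfl fun _ _ => by ring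
  -- rho facts
  have hrho01 : ∀ u : Fin d → ℝ, rho M z w k u = 0 ∨ rho M z w k u = 1 := by
    intro u; unfold rho; split
    · exact Or.inr rfl
    · exact Or.inl rfl
  have hrho_nonneg : ∀ u : Fin d → ℝ, 0 ≤ rho M z w k u := by
    intro u; rcases hrho01 u with h | h <;> rw [h] <;> norm_num
  -- nonpoor structure of B
  have hrow : ∀ i, rho M z w k (y i) = 0 → ∀ i', i' ≠ i → B i i' = 0 := by
    intro i h0 i' hne
    have h1 : B i i = 1 := hBfix i h0
    have h2 : ∑ i'' ∈ Finset.univ.erase i, B i i'' = 0 := by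
      have h3 := hBrow i
      rw [← Finset.add_sum_erase _ _ (Finset.mem_univ i)] at h3
      linarith
    exact (Finset.sum_eq_zero_iff_of_nonneg (fun i'' _ => hB0 i i'')).mp h2 i'
      (Finset.mem_erase.mpr ⟨hne, Finset.mem_univ _⟩)
  have hcol : ∀ i', rho M z w k (y i') = 0 → ∀ i, i ≠ i' → B i i' = 0 := by
    intro i' h0 i hne
    have h1 : B i' i' = 1 := hBfix i' h0
    have h2 : ∑ i'' ∈ Finset.univ.erase i', B i'' i' = 0 := by
      have h3 := hBcol i'
      rw [← Finset.add_sum_erase _ _ (Finset.mem_univ i')] at h3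
      linarith
    exact (Finset.sum_eq_zero_iff_of_nonneg (fun i'' _ => hB0 i'' i')).mp h2 i
      (Finset.mem_erase.mpr ⟨hne, Finset.mem_univ _⟩)
  have hxeq : ∀ i, rho M z w k (y i) = 0 → x i = y i := by
    intro i h0
    funext j
    rw [hxy]
    rw [Finset.sum_eq_single i]
    · rw [hBfix i h0, one_mul]
    · intro i' _ hne; rw [hrow i h0 i' hne, zero_mul]
    · intro h; exact absurd (Finset.mem_univ i) h
  -- key per-individual inequality
  have hkey : ∀ i, S (x i) * rho M z w k (x i)
      ≤ ∑ i', B i i' * (S (y i') * rho M z w k (y i')) := by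
    intro i
    by_cases hp : rho M z w k (y i) = 0
    · rw [hxeq i hp, hp, mul_zero]
      exact Finset.sum_nonneg fun i' _ =>
        mul_nonneg (hB0 i i') (mul_nonneg (hS_nonneg _) (hrho_nonneg _))
    · have hp1 : rho M z w k (y i) = 1 := (hrho01 _).resolve_left hp
      have h1 : S (x i) * rho M z w k (x i) ≤ S (x i) := by
        rcases hrho01 (x i) with h | h
        · rw [h, mul_zero]; exact hS_nonneg _
        · rw [h, mul_one]
      refine h1.trans ((hS_le i).trans (le_of_eq ?_))
      refine Finset.sum_congr rfl fun i' _ => ?_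
      rcases hrho01 (y i') with h | h
      · have hne : i ≠ i' := by
          rintro rfl; rw [h] at hp1; norm_num at hp1
        rw [hcol i' h i hne, zero_mul, zero_mul]
      · rw [h, mul_one]
  -- sum over individuals
  have hsum : ∑ i, S (x i) * rho M z w k (x i) ≤ ∑ i, S (y i) * rho M z w k (y i) := by
    calc ∑ i, S (x i) * rho M z w k (x i)
        ≤ ∑ i, ∑ i', B i i' * (S (y i') * rho M z w k (y i')) :=
          Finset.sum_le_sum fun i _ => hkey i
      _ = ∑ i', (∑ i, B i i') * (S (y i') * rho M z w k (y i')) := by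
          rw [Finset.sum_comm]
          exact Finset.sum_congr rfl fun i' _ => (Finset.sum_mul _ _ _).symm
      _ = ∑ i, S (y i) * rho M z w k (y i) := by
          simp only [hBcol, one_mul]
  -- conclude
  have hdtpos : 0 < dt := lt_of_lt_of_le hk0 hk1
  have hNpos : (0:ℝ) < (N:ℝ) := by exact_mod_cast Nat.lt_of_lt_of_le Nat.zero_lt_one hN
  have hC : (0:ℝ) ≤ 1 / ((N:ℝ) * dt) := by positivity
  have hform : ∀ (u : Fin N → Fin d → ℝ) i,
      ∑ j, w j * Dnet M z (u i) α j * rho M z w k (u i) = S (u i) * rho M z w k (u i) := by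
    intro u i
    rw [hSdef, Finset.sum_mul]
  unfold FGT
  apply mul_le_mul_of_nonneg_left _ hC
  calc ∑ i, ∑ j, w j * Dnet M z (x i) α j * rho M z w k (x i)
      = ∑ i, S (x i) * rho M z w k (x i) := Finset.sum_congr rfl fun i _ => hform x i
    _ ≤ ∑ i, S (y i) * rho M z w k (y i) := hsum
    _ = ∑ i, ∑ j, w j * Dnet M z (y i) α j * rho M z w k (y i) :=
        (Finset.sum_congr rfl fun i _ => hform y i).symm
end

section
/- Implied-weight representation of the unweighted network measure: let w_j = 1 for all j, so d̃ = d̄ := d + (Σ − d)/(d−1), and define δ_j := 1 + (Σ_j − 1)/(d−1) and implied weights w̃_j := d·δ_j/d̄. Then each w̃_j > 0, Σ_{j=1}^d w̃_j = d, and for every achievement matrix y and every α ≥ 0, FGT_α(y; z) = (1/(N d)) Σ_{i=1}^N Σ_{j=1}^d w̃_j r_{ij}^α ρ_k(y_i); that is, the unweighted network-adjusted FGT measure coincides with a standard weighted adjusted FGT measure with weights w̃ summing to d. -/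
open Finset

/-- with `δ_j = 1 + (Σ_j − 1)/(d−1)` and implied weights `w̃_j = d·δ_j/d̄`,
one has `w̃_j > 0`, `Σ_j w̃_j = d`, and the unweighted network-adjusted FGT measure equals
the standard weighted adjusted FGT measure with weights `w̃`. -/
theorem FGT_implied_weights
    (d : ℕ) (hd : 2 ≤ d) (z : Fin d → ℝ) (hz : ∀ j, 0 < z j)
    (M : Fin d → Fin d → ℝ) (hM0 : ∀ j j', 0 ≤ M j j') (hM1 : ∀ j j', M j j' ≤ 1)
    (hMdiag : ∀ j, M j j = 1)
    (db : ℝ) (hdb : db = (d : ℝ) + ((∑ j, ∑ j', M j j') - (d : ℝ)) / ((d : ℝ) - 1))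
    (k : ℝ) (hk0 : 0 < k) (hk1 : k ≤ db) (α : ℝ) (hα : 0 ≤ α)
    (wt : Fin d → ℝ)
    (hwt : ∀ j, wt j = (d : ℝ) * (1 + (colSum M j - 1) / ((d : ℝ) - 1)) / db) :
    (∀ j, 0 < wt j) ∧ (∑ j, wt j) = (d : ℝ) ∧
    (∀ (N : ℕ), 1 ≤ N → ∀ y : Fin N → Fin d → ℝ, (∀ i j, 0 ≤ y i j) →
      FGT M z (fun _ => 1) k α db y =
        (1 / ((N : ℝ) * (d : ℝ))) *
          ∑ i, ∑ j, wt j * gap z (y i) α j * rho M z (fun _ => 1) k (y i)) := by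
  have hd2 : (2:ℝ) ≤ (d:ℝ) := by exact_mod_cast hd
  have hc : (0:ℝ) < (d : ℝ) - 1 := by linarith
  have hcne : ((d:ℝ) - 1) ≠ 0 := ne_of_gt hc
  have hdpos : (0:ℝ) < (d:ℝ) := by linarith
  have hdne : (d:ℝ) ≠ 0 := ne_of_gt hdpos
  have hcol : ∀ j, (1:ℝ) ≤ colSum M j := by
    intro j
    have := Finset.single_le_sum (f := fun j' => M j' j)
      (fun i _ => hM0 i j) (Finset.mem_univ j)
    simpa [colSum, hMdiag j] using this
  have hSig : (d:ℝ) ≤ ∑ j, ∑ j', M j j' := by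
    calc (d:ℝ) = ∑ _j : Fin d, (1:ℝ) := by simp
    _ ≤ ∑ j, ∑ j', M j j' := Finset.sum_le_sum (fun j _ => by
        have := Finset.single_le_sum (f := fun j' => M j j')
          (fun i _ => hM0 j i) (Finset.mem_univ j)
        simpa [hMdiag j] using this)
  have hdb0 : 0 < db := by
    rw [hdb]
    have h0 : 0 ≤ ((∑ j, ∑ j', M j j') - (d:ℝ)) / ((d:ℝ) - 1) :=
      div_nonneg (by linarith) (le_of_lt hc)
    linarith
  have hdbne : db ≠ 0 := ne_of_gt hdb0
  have hδpos : ∀ j, 0 < 1 + (colSum M j - 1) / ((d:ℝ) - 1) := by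
    intro j
    have h1 := hcol j
    have h0 : 0 ≤ (colSum M j - 1) / ((d:ℝ) - 1) :=
      div_nonneg (by linarith) (le_of_lt hc)
    linarith
  have hcolsum : ∑ j, colSum M j = ∑ j, ∑ j', M j j' := by
    simp only [colSum]
    exact Finset.sum_comm
  have hsumδ : ∑ j, (1 + (colSum M j - 1) / ((d:ℝ) - 1)) = db := by
    rw [Finset.sum_add_distrib, ← Finset.sum_div, Finset.sum_sub_distrib, hcolsum, hdb]
    simp
  have hkey : ∀ (y : Fin d → ℝ) (β : ℝ),
      ∑ j, Dnet M z y β j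
        = ∑ j, (1 + (colSum M j - 1) / ((d:ℝ) - 1)) * gap z y β j := by
    intro y β
    have h1 : ∀ j : Fin d, ∑ j' ∈ Finset.univ.erase j, M j j' * gap z y β j'
        = (∑ j', M j j' * gap z y β j') - gap z y β j := by
      intro j
      rw [Finset.sum_erase_eq_sub (Finset.mem_univ j), hMdiag j, one_mul]
    have h2 : ∑ j' : Fin d, ∑ j : Fin d, M j j' * gap z y β j'
        = ∑ j', colSum M j' * gap z y β j' := by
      refine Finset.sum_congr rfl fun j' _ => ?_
      rw [colSum, Finset.sum_mul]
    have h3 : ∀ j : Fin d, (1 + (colSum M j - 1) / ((d:ℝ) - 1)) * gap z y β j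
        = gap z y β j + (1 / ((d:ℝ) - 1)) * (colSum M j * gap z y β j - gap z y β j) := by
      intro j
      field_simp
    calc ∑ j, Dnet M z y β j
        = ∑ j, (gap z y β j
            + (1 / ((d:ℝ) - 1)) * ((∑ j', M j j' * gap z y β j') - gap z y β j)) := by
          simp only [Dnet, h1]
      _ = (∑ j, gap z y β j) + (1 / ((d:ℝ) - 1))
            * ((∑ j, ∑ j', M j j' * gap z y β j') - ∑ j, gap z y β j) := by
          rw [Finset.sum_add_distrib, ← Finset.mul_sum, Finset.sum_sub_distrib]
      _ = (∑ j, gap z y β j) + (1 / ((d:ℝ) - 1))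
            * ((∑ j', colSum M j' * gap z y β j') - ∑ j, gap z y β j) := by
          rw [Finset.sum_comm, h2]
      _ = ∑ j, (gap z y β j
            + (1 / ((d:ℝ) - 1)) * (colSum M j * gap z y β j - gap z y β j)) := by
          rw [Finset.sum_add_distrib, ← Finset.mul_sum, Finset.sum_sub_distrib]
      _ = ∑ j, (1 + (colSum M j - 1) / ((d:ℝ) - 1)) * gap z y β j := by
          exact (Finset.sum_congr rfl fun j _ => (h3 j).symm)
  refine ⟨fun j => ?_, ?_, ?_⟩
  · rw [hwt]
    exact div_pos (mul_pos hdpos (hδpos j)) hdb0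
  · simp only [hwt]
    rw [← Finset.sum_div, ← Finset.mul_sum, hsumδ]
    field_simp
  · intro N hN y hy
    simp only [FGT, one_mul]
    have hL : ∀ i, ∑ j, Dnet M z (y i) α j * rho M z (fun _ => 1) k (y i)
        = (∑ j, (1 + (colSum M j - 1) / ((d:ℝ) - 1)) * gap z (y i) α j)
            * rho M z (fun _ => 1) k (y i) := by
      intro i
      rw [← Finset.sum_mul, hkey]
    have hR : ∀ i, ∑ j, wt j * gap z (y i) α j * rho M z (fun _ => 1) k (y i)
        = ((d:ℝ) / db) * ((∑ j, (1 + (colSum M j - 1) / ((d:ℝ) - 1)) * gap z (y i) α j)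
            * rho M z (fun _ => 1) k (y i)) := by
      intro i
      have hs : ∑ j, wt j * gap z (y i) α j
          = ((d:ℝ) / db) * ∑ j, (1 + (colSum M j - 1) / ((d:ℝ) - 1)) * gap z (y i) α j := by
        rw [Finset.mul_sum]
        refine Finset.sum_congr rfl fun j _ => ?_
        rw [hwt]
        field_simp
      rw [← Finset.sum_mul, hs, mul_assoc]
    simp only [hL, hR]
    rw [← Finset.mul_sum]
    field_simp
end
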